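/- arXiv:2412.00229 — 3 statements merged into one kernel-verified Lean document; each statement's English description precedes it below -/
import Mathlib

section
/- Let q be a real number with q > 1, let n be a natural number, and let a : Fin n → ℂ. Then the product ∏_j (1 − a_j · q^{−s}) is nonzero for every complex number s with Re(s) > 0 if and only if |a_j| ≤ 1 for every j. -/
/-- Tempered L-function conjecture in explicit terms: the product
`∏ j, (1 - a j * q^{-s})` is nonzero for every `s` with `Re s > 0`
iff every `a j` has absolute value at most `1`. -/
theorem stmt0 (q : ℝ) (hq : 1 < q) (n : ℕ) (a : Fin n → ℂ) :
    (∀ s : ℂ, 0 < s.re → ∏ j, (1 - a j * (q : ℂ) ^ (-s)) ≠ 0) ↔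
      ∀ j, ‖a j‖ ≤ 1 := by
  have hq0 : (0 : ℝ) < q := lt_trans one_pos hq
  have hqC : (q : ℂ) ≠ 0 := by exact_mod_cast hq0.ne'
  have hlq : 0 < Real.log q := Real.log_pos hq
  constructor
  · intro h j
    by_contra hj
    push_neg at hj
    have haj : a j ≠ 0 := by
      intro h0; rw [h0] at hj; simp at hj; linarith
    set s : ℂ := Complex.log (a j) / (Real.log q : ℂ) with hs
    have hsre : 0 < s.re := by
      have : s.re = Real.log ‖a j‖ / Real.log q := by
        rw [hs, Complex.div_re]
        simp [Complex.log_re, Complex.normSq_ofReal]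
        field_simp
      rw [this]
      exact div_pos (Real.log_pos hj) hlq
    apply h s hsre
    apply Finset.prod_eq_zero (Finset.mem_univ j)
    have hcpow : (q : ℂ) ^ (-s) = (a j)⁻¹ := by
      rw [Complex.cpow_def_of_ne_zero hqC]
      have hlog : Complex.log (q : ℂ) = (Real.log q : ℂ) := by
        rw [Complex.ofReal_log hq0.le]
      have hlqC : (Real.log q : ℂ) ≠ 0 := by exact_mod_cast hlq.ne'
      have harg : (Real.log q : ℂ) * (-s) = -Complex.log (a j) := by
        rw [hs]; field_simp
      rw [hlog, harg, Complex.exp_neg, Complex.exp_log haj]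
    rw [hcpow, mul_inv_cancel₀ haj, sub_self]
  · intro h s hsre
    rw [Finset.prod_ne_zero_iff]
    intro j _
    intro h0
    have he : a j * (q : ℂ) ^ (-s) = 1 := by
      have := sub_eq_zero.mp h0
      exact this.symm
    have habs : ‖a j * (q : ℂ) ^ (-s)‖ = 1 := by rw [he]; simp
    have hcp : ‖(q : ℂ) ^ (-s)‖ = q ^ (-s).re := by
      rw [Complex.norm_cpow_eq_rpow_re_of_pos hq0]
    have hlt : ‖a j * (q : ℂ) ^ (-s)‖ < 1 := by
      rw [norm_mul, hcp]
      calc ‖a j‖ * q ^ (-s).re ≤ 1 * q ^ (-s).re := by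
            apply mul_le_mul_of_nonneg_right (h j) (Real.rpow_nonneg hq0.le _)
        _ = q ^ (-s).re := one_mul _
        _ < 1 := Real.rpow_lt_one_of_one_lt_of_neg hq (by simpa using neg_neg_iff_pos.mpr hsre)
    rw [habs] at hlt
    exact lt_irrefl 1 hlt
end

section
/- Let q be a real number with q > 1 and let a be a nonzero complex number. Let T_w and T_s be the ℂ-linear endomorphisms of ℂ² defined on the standard basis (e, f) by T_w(e) = f, T_w(f) = q·e + (q−1)·f, and T_s(e) = (q−1)·e + (q/a)·f, T_s(f) = a·e. Then there exists a nonzero vector v ∈ ℂ² that is simultaneously an eigenvector of T_w and of T_s if and only if a ∈ {1, −q, q²}. -/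
lemma stmt6_decomp (T : Module.End ℂ (Fin 2 → ℂ)) (x y : ℂ) :
    T ![x, y] = x • T ![1, 0] + y • T ![0, 1] := by
  rw [← map_smul, ← map_smul, ← map_add]
  congr 1
  funext i; fin_cases i <;> simp

/-- Reducibility criterion for unramified principal series of `SL₂`:
the Hecke operators `T_w` (`e ↦ f`, `f ↦ q e + (q-1) f`) and
`T_s` (`e ↦ (q-1) e + (q/a) f`, `f ↦ a e`) have a common eigenvector
iff `a ∈ {1, -q, q²}`. -/
theorem stmt6 (q : ℝ) (hq : 1 < q) (a : ℂ) (ha : a ≠ 0)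
    (Tw Ts : Module.End ℂ (Fin 2 → ℂ))
    (hTwe : Tw ![1, 0] = ![0, 1])
    (hTwf : Tw ![0, 1] = (q : ℂ) • ![1, 0] + ((q : ℂ) - 1) • ![0, 1])
    (hTse : Ts ![1, 0] = ((q : ℂ) - 1) • ![1, 0] + ((q : ℂ) / a) • ![0, 1])
    (hTsf : Ts ![0, 1] = a • ![1, 0]) :
    (∃ v : Fin 2 → ℂ, v ≠ 0 ∧ (∃ μ : ℂ, Tw v = μ • v) ∧ (∃ ν : ℂ, Ts v = ν • v)) ↔
      a ∈ ({1, -(q : ℂ), (q : ℂ) ^ 2} : Set ℂ) := by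
  have hq0 : (q : ℂ) ≠ 0 := by
    exact_mod_cast ne_of_gt (lt_trans one_pos hq)
  constructor
  · rintro ⟨v, hv, ⟨μ, hμ⟩, ⟨ν, hν⟩⟩
    simp only [Set.mem_insert_iff, Set.mem_singleton_iff]
    set x := v 0 with hx
    set y := v 1 with hy
    have hveq : v = ![x, y] := by funext i; fin_cases i <;> rfl
    rw [hveq, stmt6_decomp Tw, hTwe, hTwf] at hμ
    rw [hveq, stmt6_decomp Ts, hTse, hTsf] at hν
    have h1 := congrFun hμ 0
    have h2 := congrFun hμ 1
    have h3 := congrFun hν 0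
    have h4 := congrFun hν 1
    simp [Matrix.cons_val_zero, Matrix.cons_val_one] at h1 h2 h3 h4
    field_simp at h4
    -- h1 : y * q = μ * x; h2 : x + y*(q-1) = μ * y
    -- h3 : x*(q-1) + y*a = ν * x; h4 : x * q = ν * y * a
    have hy0 : y ≠ 0 := by
      intro hy0
      apply hv
      have hx0 : x = 0 := by
        have := h2
        rw [hy0] at this
        simpa using this
      rw [hveq, hx0, hy0]
      funext i; fin_cases i <;> rfl
    have hfac : (x - y) * (x + (q : ℂ) * y) = 0 := by
      linear_combination x * h2 - y * h1
    rcases mul_eq_zero.mp hfac with hxy | hxy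
    · -- x = y : get a = 1 or a = -q
      have hxe : x = y := sub_eq_zero.mp hxy
      have hfac2 : (a - 1) * (a + (q : ℂ)) * y = 0 := by
        rw [hxe] at h3 h4
        linear_combination a * h3 - h4
      rcases mul_eq_zero.mp hfac2 with hfac2 | hy0' 
      · rcases mul_eq_zero.mp hfac2 with h | h
        · left; linear_combination h
        · right; left; linear_combination h
      · exact absurd hy0' hy0
    · -- x = -q y : get a = q^2 or a = -q
      have hxe : x = -(q : ℂ) * y := by linear_combination hxy
      have hfac2 : (a - (q : ℂ) ^ 2) * (a + (q : ℂ)) * y = 0 := by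
        rw [hxe] at h3 h4
        linear_combination a * h3 + (q : ℂ) * h4
      rcases mul_eq_zero.mp hfac2 with hfac2 | hy0' 
      · rcases mul_eq_zero.mp hfac2 with h | h
        · right; right; linear_combination h
        · right; left; linear_combination h
      · exact absurd hy0' hy0
  · intro hmem
    rcases hmem with rfl | rfl | rfl
    · -- a = 1
      refine ⟨![1, 1], ?_, ⟨(q : ℂ), ?_⟩, ⟨(q : ℂ), ?_⟩⟩
      · intro h; have := congrFun h 0; simp at this
      · rw [stmt6_decomp Tw, hTwe, hTwf]
        funext i; fin_cases i <;> simp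
      · rw [stmt6_decomp Ts, hTse, hTsf]
        funext i; fin_cases i <;> simp
    · -- a = -q
      refine ⟨![1, 1], ?_, ⟨(q : ℂ), ?_⟩, ⟨-1, ?_⟩⟩
      · intro h; have := congrFun h 0; simp at this
      · rw [stmt6_decomp Tw, hTwe, hTwf]
        funext i; fin_cases i <;> simp
      · rw [stmt6_decomp Ts, hTse, hTsf]
        have : (q : ℂ) / -(q : ℂ) = -1 := by
          rw [div_neg, div_self hq0]
        rw [stmt6_decomp] at *
        funext i; fin_cases i <;> simp [this] <;> ring
    · -- a = q^2
      refine ⟨![-(q : ℂ), 1], ?_, ⟨-1, ?_⟩, ⟨-1, ?_⟩⟩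
      · intro h; have := congrFun h 0; simp [hq0] at this
      · rw [stmt6_decomp Tw, hTwe, hTwf]
        funext i; fin_cases i <;> simp <;> ring
      · rw [stmt6_decomp Ts, hTse, hTsf]
        have h2 : (q : ℂ) / (q : ℂ) ^ 2 = 1 / q := by
          rw [pow_two, div_mul_eq_div_div, div_self hq0]
        funext i; fin_cases i <;> simp [h2, hq0] <;> ring
end

section
/- Let q be a real number with q > 1 and let a be a nonzero complex number. Let T_w and T_s be the ℂ-linear endomorphisms of ℂ² defined on the standard basis (e, f) by T_w(e) = f, T_w(f) = q³·e + (q³−1)·f, and T_s(e) = (q−1)·e + (q/a)·f, T_s(f) = a·e. Then there exists a nonzero vector v ∈ ℂ² that is simultaneously an eigenvector of T_w and of T_s if and only if a ∈ {1, −q, −q³, q⁴}. -/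
/-- Reducibility criterion for unramified principal series of `SU_{2,1}`:
the Hecke operators `T_w` (`e ↦ f`, `f ↦ q³ e + (q³-1) f`) and
`T_s` (`e ↦ (q-1) e + (q/a) f`, `f ↦ a e`) have a common eigenvector
iff `a ∈ {1, -q, -q³, q⁴}`. -/
theorem stmt8 (q : ℝ) (hq : 1 < q) (a : ℂ) (ha : a ≠ 0)
    (Tw Ts : Module.End ℂ (Fin 2 → ℂ))
    (hTwe : Tw ![1, 0] = ![0, 1])
    (hTwf : Tw ![0, 1] = ((q : ℂ) ^ 3) • ![1, 0] + ((q : ℂ) ^ 3 - 1) • ![0, 1])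
    (hTse : Ts ![1, 0] = ((q : ℂ) - 1) • ![1, 0] + ((q : ℂ) / a) • ![0, 1])
    (hTsf : Ts ![0, 1] = a • ![1, 0]) :
    (∃ v : Fin 2 → ℂ, v ≠ 0 ∧ (∃ μ : ℂ, Tw v = μ • v) ∧ (∃ ν : ℂ, Ts v = ν • v)) ↔
      a ∈ ({1, -(q : ℂ), -(q : ℂ) ^ 3, (q : ℂ) ^ 4} : Set ℂ) := by
  have hq0 : (q : ℂ) ≠ 0 := by
    have h : (0:ℝ) < q := lt_trans one_pos hq
    exact_mod_cast h.ne'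
  constructor
  · rintro ⟨v, hv, ⟨μ, hμ⟩, ⟨ν, hν⟩⟩
    set x := v 0 with hxdef
    set y := v 1 with hydef
    have hvdec : v = x • ![1, 0] + y • ![0, 1] := by
      funext i; fin_cases i <;> simp [hxdef, hydef]
    rw [hvdec, map_add, map_smul, map_smul, hTwe, hTwf] at hμ
    rw [hvdec, map_add, map_smul, map_smul, hTse, hTsf] at hν
    have E1 := congrFun hμ 0
    have E2 := congrFun hμ 1
    have F1 := congrFun hν 0
    have F2 := congrFun hν 1
    simp only [Pi.add_apply, Pi.smul_apply, Matrix.cons_val_zero, Matrix.cons_val_one,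
      Matrix.head_cons, smul_eq_mul, mul_zero, mul_one, add_zero, zero_add] at E1 E2 F1 F2
    have hxne : x ≠ 0 := by
      intro hx
      have hy : y = 0 := by
        rw [hx] at F1
        simp only [zero_mul, zero_add, mul_zero] at F1
        rcases mul_eq_zero.mp F1 with h | h
        · exact h
        · exact absurd h ha
      apply hv
      rw [hvdec, hx, hy]
      simp
    have F2' : x * (q : ℂ) = ν * y * a := by
      field_simp at F2
      linear_combination F2
    have A : (y - x) * ((q:ℂ)^3 * y + x) = 0 := by
      linear_combination y * E1 - x * E2
    have B : a*((q:ℂ)-1)*x*y + a^2*y^2 - (q:ℂ)*x^2 = 0 := by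
      linear_combination a*y*F1 - x*F2'
    simp only [Set.mem_insert_iff, Set.mem_singleton_iff]
    rcases mul_eq_zero.mp A with h | h
    · have hy : y = x := by linear_combination h
      rw [hy] at B
      have hfact : (a - 1) * (a + (q:ℂ)) * x^2 = 0 := by linear_combination B
      rcases mul_eq_zero.mp hfact with h2 | h2
      · rcases mul_eq_zero.mp h2 with h3 | h3
        · exact Or.inl (by linear_combination h3)
        · exact Or.inr (Or.inl (by linear_combination h3))
      · exact absurd h2 (pow_ne_zero 2 hxne)
    · have hx' : x = -(q:ℂ)^3 * y := by linear_combination h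
      have hyne : y ≠ 0 := by
        intro h0; exact hxne (by rw [hx', h0, mul_zero])
      rw [hx'] at B
      have hfact : (a + (q:ℂ)^3) * (a - (q:ℂ)^4) * y^2 = 0 := by linear_combination B
      rcases mul_eq_zero.mp hfact with h2 | h2
      · rcases mul_eq_zero.mp h2 with h3 | h3
        · exact Or.inr (Or.inr (Or.inl (by linear_combination h3)))
        · exact Or.inr (Or.inr (Or.inr (by linear_combination h3)))
      · exact absurd h2 (pow_ne_zero 2 hyne)
  · intro hmem
    have e01 : (![1,1] : Fin 2 → ℂ) = ![1,0] + ![0,1] := by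
      funext i; fin_cases i <;> simp
    have e2 : (![(q:ℂ)^3, -1] : Fin 2 → ℂ) = ((q:ℂ)^3) • ![1,0] + (-1 : ℂ) • ![0,1] := by
      funext i; fin_cases i <;> simp
    have hv1 : (![1,1] : Fin 2 → ℂ) ≠ 0 := by
      intro h; have := congrFun h 0; simp at this
    have hv2 : (![(q:ℂ)^3, -1] : Fin 2 → ℂ) ≠ 0 := by
      intro h; have := congrFun h 1; simp at this
    have hTw1 : Tw ![1,1] = ((q:ℂ)^3) • ![1,1] := by
      rw [e01, map_add, hTwe, hTwf]
      funext i; fin_cases i <;> simp <;> ring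
    have hTw2 : Tw ![(q:ℂ)^3, -1] = (-1 : ℂ) • ![(q:ℂ)^3, -1] := by
      rw [e2, map_add, map_smul, map_smul, hTwe, hTwf]
      funext i; fin_cases i <;> simp <;> ring
    simp only [Set.mem_insert_iff, Set.mem_singleton_iff] at hmem
    rcases hmem with h1 | h1 | h1 | h1
    · refine ⟨![1,1], hv1, ⟨(q:ℂ)^3, hTw1⟩, ⟨(q:ℂ), ?_⟩⟩
      rw [e01, map_add, hTse, hTsf, h1]
      funext i; fin_cases i <;> simp <;> ring
    · refine ⟨![1,1], hv1, ⟨(q:ℂ)^3, hTw1⟩, ⟨(-1 : ℂ), ?_⟩⟩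
      rw [e01, map_add, hTse, hTsf, h1]
      funext i; fin_cases i <;> simp <;> first | ring1 | (field_simp; ring1) | field_simp
    · refine ⟨![(q:ℂ)^3, -1], hv2, ⟨(-1 : ℂ), hTw2⟩, ⟨(q:ℂ), ?_⟩⟩
      rw [e2, map_add, map_smul, map_smul, hTse, hTsf, h1]
      funext i; fin_cases i <;> simp <;> first | ring1 | (field_simp; ring1) | field_simp
    · refine ⟨![(q:ℂ)^3, -1], hv2, ⟨(-1 : ℂ), hTw2⟩, ⟨(-1 : ℂ), ?_⟩⟩
      rw [e2, map_add, map_smul, map_smul, hTse, hTsf, h1]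
      funext i; fin_cases i <;> simp <;> first | ring1 | (field_simp; ring1) | field_simp
end
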